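/- Let φ: [0,∞) → [0,∞) be nonnegative, concave, nondecreasing, subadditive with φ(0)=0 and φ(t)/log t → ∞, and set a = lim_{t→∞} φ(t)/t (which exists in [0,∞)). If the differentiation operator D on the weighted Bergman space B_w^∞ satisfies ‖D^n‖ ≤ n! r^{-n} e^{φ(r)} for all r > 0 and n ∈ ℕ, then the spectral radius of D is at most a; in particular if a = 0 then D is quasinilpotent, i.e., lim_{n→∞} ‖D^n‖^{1/n} = 0. -/

import Mathlib

open Filter

lemma fact_bound (n : ℕ) (hn : 1 ≤ n) :
    (n.factorial : ℝ) ≤ Real.exp 1 * n * (n : ℝ) ^ n * Real.exp (-(n : ℝ)) := by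
  have hn0 : (0:ℝ) < n := by exact_mod_cast hn
  have h1 : Stirling.stirlingSeq n ≤ Real.exp 1 / Real.sqrt 2 := by
    obtain ⟨m, rfl⟩ := Nat.exists_eq_add_of_le hn
    rw [← Stirling.stirlingSeq_one]
    have := Stirling.stirlingSeq'_antitone (Nat.zero_le m)
    simpa [Function.comp, Nat.add_comm] using this
  have hd : (0:ℝ) < Real.sqrt (2 * n) * ((n : ℝ) / Real.exp 1) ^ n := by positivity
  have h2 : (n.factorial : ℝ) =
      Stirling.stirlingSeq n * (Real.sqrt (2 * n) * ((n : ℝ) / Real.exp 1) ^ n) := by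
    rw [Stirling.stirlingSeq]; field_simp
  have hsqrt : Real.sqrt (2 * n) ≤ Real.sqrt 2 * n := by
    rw [Real.sqrt_mul (by norm_num)]
    have hn1 : (1:ℝ) ≤ n := by exact_mod_cast hn
    have : Real.sqrt n ≤ n := by
      nlinarith [Real.sq_sqrt hn0.le, Real.sqrt_nonneg (n:ℝ), Real.sqrt_le_sqrt (show (n:ℝ) ≤ n^2 by nlinarith)]
    nlinarith [Real.sqrt_nonneg (2:ℝ)]
  have hpow : ((n : ℝ) / Real.exp 1) ^ n = (n : ℝ) ^ n * Real.exp (-(n : ℝ)) := by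
    rw [div_pow, Real.exp_one_pow, Real.exp_neg]
    ring
  calc (n.factorial : ℝ) = Stirling.stirlingSeq n * (Real.sqrt (2 * n) * ((n : ℝ) / Real.exp 1) ^ n) := h2
    _ ≤ (Real.exp 1 / Real.sqrt 2) * (Real.sqrt (2 * n) * ((n : ℝ) / Real.exp 1) ^ n) :=
        mul_le_mul_of_nonneg_right h1 hd.le
    _ ≤ (Real.exp 1 / Real.sqrt 2) * ((Real.sqrt 2 * n) * ((n : ℝ) / Real.exp 1) ^ n) := by
        gcongr
    _ = Real.exp 1 * n * (n : ℝ) ^ n * Real.exp (-(n : ℝ)) := by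
        rw [hpow]
        have h2 : Real.sqrt 2 ≠ 0 := by positivity
        field_simp

/-- if the differentiation operator `D` on `B_w^∞` satisfies the bounds
`‖D^n‖ ≤ n! r^{-n} e^{φ(r)}`, then its spectral radius is at most `a = lim φ(t)/t`;
in particular, if `a = 0` then `D` is quasinilpotent.  Here `D` is an element of the
Banach algebra of bounded operators on the Banach space `B_w^∞`. -/
theorem stmt_1 {A : Type*} [NormedRing A] [NormedAlgebra ℂ A] [CompleteSpace A]
    (φ : ℝ → ℝ)
    (hφ0 : ∀ t, 0 ≤ t → 0 ≤ φ t)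
    (hconc : ConcaveOn ℝ (Set.Ici 0) φ)
    (hmono : MonotoneOn φ (Set.Ici 0))
    (hsub : ∀ s t : ℝ, 0 ≤ s → 0 ≤ t → φ (s + t) ≤ φ s + φ t)
    (hzero : φ 0 = 0)
    (hlog : Tendsto (fun t => φ t / Real.log t) atTop atTop)
    (a : ℝ) (ha0 : 0 ≤ a)
    (ha : Tendsto (fun t => φ t / t) atTop (nhds a))
    (D : A)
    (hD : ∀ r : ℝ, 0 < r → ∀ n : ℕ,
      ‖D ^ n‖ ≤ (n.factorial : ℝ) * r⁻¹ ^ n * Real.exp (φ r)) :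
    spectralRadius ℂ D ≤ ENNReal.ofReal a ∧
      (a = 0 → Tendsto (fun n : ℕ => ‖D ^ n‖ ^ (1 / (n : ℝ))) atTop (nhds 0)) := by
  have gelfand := spectrum.pow_norm_pow_one_div_tendsto_nhds_spectralRadius D
  have key : ∀ b : ℝ, a < b → spectralRadius ℂ D ≤ ENNReal.ofReal b := by
    intro b hb
    have hb0 : (0:ℝ) < b := lt_of_le_of_lt ha0 hb
    set c : ℝ := (a + b) / (2 * b) with hc
    have hc1 : c < 1 := by
      rw [hc, div_lt_one (by linarith)]
      linarith
    have hc0 : 0 ≤ c := by positivity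
    -- eventually φ(n/b) ≤ c * n
    have ht : Tendsto (fun n : ℕ => (n : ℝ) / b) atTop atTop :=
      (tendsto_natCast_atTop_atTop).atTop_div_const hb0
    have h1 : ∀ᶠ n : ℕ in atTop, φ ((n : ℝ) / b) ≤ c * n := by
      have hcomp : Tendsto (fun n : ℕ => φ ((n : ℝ) / b) / ((n : ℝ) / b)) atTop (nhds a) :=
        ha.comp ht
      filter_upwards [hcomp.eventually_lt_const (show a < (a + b) / 2 by linarith),
        eventually_ge_atTop 1] with n hlt hn1
      have hn0 : (0:ℝ) < (n : ℝ) / b := by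
        have : (0:ℝ) < n := by exact_mod_cast hn1
        positivity
      have := (div_lt_iff₀ hn0).mp hlt
      calc φ ((n : ℝ) / b) ≤ (a + b) / 2 * ((n : ℝ) / b) := this.le
        _ = c * n := by rw [hc]; field_simp
    -- eventually 1 + log n ≤ (1 - c) n
    have h2 : ∀ᶠ n : ℕ in atTop, 1 + Real.log n ≤ (1 - c) * n := by
      have hlogn : Tendsto (fun n : ℕ => Real.log n / n) atTop (nhds 0) := by
        have := (Real.tendsto_pow_log_div_mul_add_atTop 1 0 1 one_ne_zero).comp
          tendsto_natCast_atTop_atTop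
        simpa [Function.comp_def] using this
      have h1c : 0 < (1 - c) / 2 := by linarith
      have hbig : Tendsto (fun n : ℕ => (1 - c) / 2 * n) atTop atTop :=
        (tendsto_natCast_atTop_atTop).const_mul_atTop h1c
      filter_upwards [hlogn.eventually_lt_const h1c, hbig.eventually_ge_atTop 1,
        eventually_ge_atTop 1] with n hlog2 hbig1 hn1
      have hn0 : (0:ℝ) < n := by exact_mod_cast hn1
      have : Real.log n ≤ (1 - c) / 2 * n := by
        have := (div_lt_iff₀ hn0).mp hlog2
        linarith
      linarith
    have h3 : ∀ᶠ n : ℕ in atTop, ‖D ^ n‖ ≤ b ^ n := by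
      filter_upwards [h1, h2, eventually_ge_atTop 1] with n hn1 hn2 hn3
      have hn0 : (0:ℝ) < n := by exact_mod_cast hn3
      have hr : (0:ℝ) < (n : ℝ) / b := by positivity
      have hnn : ((n : ℝ)) ^ n ≠ 0 := by positivity
      have hphi : 0 ≤ φ ((n : ℝ) / b) := hφ0 _ hr.le
      calc ‖D ^ n‖ ≤ (n.factorial : ℝ) * ((n : ℝ) / b)⁻¹ ^ n * Real.exp (φ ((n : ℝ) / b)) :=
            hD _ hr n
        _ ≤ (Real.exp 1 * n * (n : ℝ) ^ n * Real.exp (-(n : ℝ))) * (b / n) ^ n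
              * Real.exp (c * n) := by
            rw [inv_div]
            gcongr
            exact fact_bound n hn3
        _ = b ^ n * Real.exp (1 + Real.log n + (c * n - n)) := by
            rw [Real.exp_add, Real.exp_add, Real.exp_log hn0, Real.exp_sub, div_pow]
            rw [Real.exp_neg]
            field_simp
        _ ≤ b ^ n * 1 := by
            gcongr
            rw [Real.exp_le_one_iff]
            linarith
        _ = b ^ n := mul_one _
    refine le_of_tendsto gelfand ?_
    filter_upwards [h3, eventually_ge_atTop 1] with n hn hn1
    have hn0 : ((n : ℝ)) ≠ 0 := by
      have : (0:ℝ) < n := by exact_mod_cast hn1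
      exact this.ne'
    refine ENNReal.ofReal_le_ofReal ?_
    calc ‖D ^ n‖ ^ (1 / (n : ℝ)) ≤ (b ^ n) ^ (1 / (n : ℝ)) :=
          Real.rpow_le_rpow (norm_nonneg _) hn (by positivity)
      _ = b := by
          rw [← Real.rpow_natCast b n, ← Real.rpow_mul hb0.le, mul_one_div,
            div_self hn0, Real.rpow_one]
  have part1 : spectralRadius ℂ D ≤ ENNReal.ofReal a := by
    refine ENNReal.le_of_forall_pos_le_add fun ε hε _ => ?_
    calc spectralRadius ℂ D ≤ ENNReal.ofReal (a + ε) := key _ (by exact_mod_cast lt_add_of_pos_right a hε)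
      _ = ENNReal.ofReal a + ENNReal.ofReal ε := ENNReal.ofReal_add ha0 ε.2
      _ = ENNReal.ofReal a + ε := by rw [ENNReal.ofReal_coe_nnreal]
  refine ⟨part1, fun ha' => ?_⟩
  subst ha'
  have hzero' : spectralRadius ℂ D = 0 := le_antisymm (by simpa using part1) (by simp)
  rw [hzero'] at gelfand
  have := (ENNReal.tendsto_toReal (by simp : (0:ENNReal) ≠ ⊤)).comp gelfand
  simp only [ENNReal.toReal_zero] at this
  refine this.congr fun n => ?_
  simp only [Function.comp]
  exact ENNReal.toReal_ofReal (by positivity)
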